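/- Let {x_k} be the RK iterates for the system Ãx ≈ b̃ with arbitrary initial point x_0 ∈ ℝⁿ. Then for every matrix A ∈ ℝ^{m×n} and every vector b ∈ ℝᵐ with b ∈ range(A) (so that Ax = b is consistent), setting x_LS = A†b, E = Ã − A and ε = b̃ − b, one has for every k ≥ 0: 𝔼‖x_k − x_0ⁿ − x_LSʳ‖² ≤ (1 − 1/R̃)^k ‖x_0ʳ − x_LSʳ‖² + ‖E x_LS − ε‖²/σ̃_min². -/

import Mathlib

open Matrix

noncomputable section

namespace RK

/-- The Euclidean inner product on `Fin n → ℝ`. -/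
def dot {n : ℕ} (v w : Fin n → ℝ) : ℝ := ∑ i, v i * w i

/-- The squared Euclidean norm on `Fin n → ℝ`. -/
def normSq {n : ℕ} (v : Fin n → ℝ) : ℝ := ∑ i, v i ^ 2

/-- The Euclidean norm on `Fin n → ℝ`. -/
def euclNorm {n : ℕ} (v : Fin n → ℝ) : ℝ := Real.sqrt (normSq v)

/-- The squared Frobenius norm of a matrix. -/
def frobSq {m n : ℕ} (A : Matrix (Fin m) (Fin n) ℝ) : ℝ := ∑ i, ∑ j, A i j ^ 2

/-- One step of the (randomized) Kaczmarz method for the system `A x ≈ b`, using row `i`: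
`x ↦ x - ((aᵢᵀ x - bᵢ) / ‖aᵢ‖²) aᵢ`. -/
def rkStep {m n : ℕ} (A : Matrix (Fin m) (Fin n) ℝ) (b : Fin m → ℝ) (i : Fin m)
    (x : Fin n → ℝ) : Fin n → ℝ :=
  x - ((dot (A i) x - b i) / normSq (A i)) • A i

/-- `rkExp A b x0 k f` is the expectation `𝔼 f(x_k)` of `f` evaluated at the `k`-th iterate of the
randomized Kaczmarz algorithm applied to `A x ≈ b` started at `x0`, where at each step the row
index `i` is drawn independently at random with probability `‖aᵢ‖² / ‖A‖_F²`. -/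
def rkExp {m n : ℕ} (A : Matrix (Fin m) (Fin n) ℝ) (b : Fin m → ℝ) (x0 : Fin n → ℝ) :
    ℕ → ((Fin n → ℝ) → ℝ) → ℝ
  | 0, f => f x0
  | k + 1, f => rkExp A b x0 k fun x => ∑ i, normSq (A i) / frobSq A * f (rkStep A b i x)

/-- The four Penrose conditions: `B` is the Moore–Penrose pseudoinverse of `A`. -/
def IsMoorePenrose {m n : ℕ} (A : Matrix (Fin m) (Fin n) ℝ)
    (B : Matrix (Fin n) (Fin m) ℝ) : Prop :=
  A * B * A = A ∧ B * A * B = B ∧ (A * B)ᵀ = A * B ∧ (B * A)ᵀ = B * A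

/-- The row space `range(Aᵀ)` of a matrix `A`. -/
def rowSpace {m n : ℕ} (A : Matrix (Fin m) (Fin n) ℝ) : Set (Fin n → ℝ) :=
  {v | ∃ u : Fin m → ℝ, v = Aᵀ.mulVec u}

/-- The null space (kernel) of a matrix `A`. -/
def nullSpace {m n : ℕ} (A : Matrix (Fin m) (Fin n) ℝ) : Set (Fin n → ℝ) :=
  {v | A.mulVec v = 0}

/-- `σ` is the smallest nonzero singular value of `A`: `σ > 0`, `σ²` is an eigenvalue of `AᵀA`,
and `σ²` is less than or equal to every nonzero eigenvalue of `AᵀA`. -/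
def IsSmallestNonzeroSingularValue {m n : ℕ} (A : Matrix (Fin m) (Fin n) ℝ) (σ : ℝ) : Prop :=
  0 < σ ∧ (∃ v : Fin n → ℝ, v ≠ 0 ∧ (Aᵀ * A).mulVec v = σ ^ 2 • v) ∧
    ∀ μ : ℝ, μ ≠ 0 → (∃ v : Fin n → ℝ, v ≠ 0 ∧ (Aᵀ * A).mulVec v = μ • v) → σ ^ 2 ≤ μ

/-! ### Auxiliary lemmas -/

variable {m n : ℕ}

lemma dot_eq_dotProduct (v w : Fin n → ℝ) : dot v w = v ⬝ᵥ w := rfl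

lemma normSq_eq_dot (v : Fin n → ℝ) : normSq v = v ⬝ᵥ v := by
  simp [normSq, dotProduct, sq]

lemma normSq_nonneg (v : Fin n → ℝ) : 0 ≤ normSq v :=
  Finset.sum_nonneg fun _ _ => sq_nonneg _

lemma normSq_eq_zero {v : Fin n → ℝ} (h : normSq v = 0) : v = 0 := by
  funext i
  have := (Finset.sum_eq_zero_iff_of_nonneg (fun i _ => sq_nonneg (v i))).1 h i (Finset.mem_univ i)
  simpa using pow_eq_zero_iff (n := 2) (by norm_num) |>.1 this

lemma normSq_pos {v : Fin n → ℝ} (h : v ≠ 0) : 0 < normSq v :=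
  lt_of_le_of_ne (normSq_nonneg v) (fun h0 => h (normSq_eq_zero h0.symm))

lemma normSq_mulVec (At : Matrix (Fin m) (Fin n) ℝ) (v : Fin n → ℝ) :
    normSq (At.mulVec v) = v ⬝ᵥ (Atᵀ * At).mulVec v := by
  rw [normSq_eq_dot, ← mulVec_mulVec, dotProduct_mulVec v Atᵀ, vecMul_transpose]

lemma dotProduct_sum' {N : ℕ} (v : Fin n → ℝ) (f : Fin N → Fin n → ℝ) :
    v ⬝ᵥ (∑ j, f j) = ∑ j, v ⬝ᵥ f j := by
  simp only [dotProduct, Finset.sum_apply, Finset.mul_sum]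
  exact Finset.sum_comm

lemma mulVec_sum' {N : ℕ} (M : Matrix (Fin m) (Fin n) ℝ) (f : Fin N → Fin n → ℝ) :
    M.mulVec (∑ j, f j) = ∑ j, M.mulVec (f j) := by
  funext i
  simp only [mulVec, Finset.sum_apply]
  exact dotProduct_sum' _ _

/-- Restricted to the row space, `‖At v‖² ≥ σ² ‖v‖²`. -/
lemma spectral_bound (At : Matrix (Fin m) (Fin n) ℝ) (σ : ℝ)
    (hσ : IsSmallestNonzeroSingularValue At σ) (v : Fin n → ℝ) (hv : v ∈ rowSpace At) :
    σ ^ 2 * normSq v ≤ normSq (At.mulVec v) := by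
  obtain ⟨hσpos, -, hmin⟩ := hσ
  obtain ⟨u, hu⟩ := hv
  have hM : (Atᵀ * At).IsHermitian := by
    simpa using isHermitian_conjTranspose_mul_self At
  set B := hM.eigenvectorBasis with hB
  set lam := hM.eigenvalues with hlam
  set c : Fin n → ℝ := fun j => (B j : Fin n → ℝ) ⬝ᵥ v with hc
  have heig : ∀ j, (Atᵀ * At).mulVec (B j) = lam j • (B j : Fin n → ℝ) := fun j => by
    simpa using hM.mulVec_eigenvectorBasis j
  have hrep : v = ∑ j, c j • (B j : Fin n → ℝ) := by
    have := B.sum_repr' (WithLp.toLp 2 v)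
    have h2 : ∀ j, (inner ℝ (B j) (WithLp.toLp 2 v) : ℝ) = c j := fun j => by
      simp [PiLp.inner_apply, hc, dotProduct, RCLike.inner_apply, mul_comm]
    calc v = ∑ j, (inner ℝ (B j) (WithLp.toLp 2 v) : ℝ) • (B j : Fin n → ℝ) := by
          have := congrArg (WithLp.ofLp (p := 2)) this
          rw [WithLp.ofLp_sum] at this
          simp only [WithLp.ofLp_smul] at this
          exact this.symm
    _ = ∑ j, c j • (B j : Fin n → ℝ) := by simp_rw [h2]
  have horm : ∀ j k, (B j : Fin n → ℝ) ⬝ᵥ (B k : Fin n → ℝ) = if j = k then 1 else 0 := by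
    intro j k
    have := (orthonormal_iff_ite.mp B.orthonormal) j k
    simpa [PiLp.inner_apply, RCLike.inner_apply, dotProduct, mul_comm] using this
  have hdotc : ∀ j, v ⬝ᵥ (B j : Fin n → ℝ) = c j := fun j => dotProduct_comm _ _
  have hnormSq : normSq v = ∑ j, c j ^ 2 := by
    rw [normSq_eq_dot]
    conv_lhs => rw [show v ⬝ᵥ v = v ⬝ᵥ ∑ j, c j • (B j : Fin n → ℝ) by rw [← hrep]]
    rw [dotProduct_sum']
    refine Finset.sum_congr rfl fun j _ => ?_
    rw [dotProduct_smul, hdotc, smul_eq_mul, pow_two]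
  have hquad : normSq (At.mulVec v) = ∑ j, lam j * c j ^ 2 := by
    rw [normSq_mulVec]
    conv_lhs => rw [show (Atᵀ * At).mulVec v = (Atᵀ * At).mulVec (∑ j, c j • (B j : Fin n → ℝ)) by rw [← hrep]]
    rw [mulVec_sum', dotProduct_sum']
    congr 1; funext j
    rw [mulVec_smul, heig j, smul_smul, dotProduct_smul, hdotc, smul_eq_mul]
    ring
  have hzero : ∀ j, lam j = 0 → c j = 0 := by
    intro j h0
    have hAB : At.mulVec (B j) = 0 := by
      apply normSq_eq_zero
      rw [normSq_mulVec, heig j, h0, zero_smul]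
      simp
    rw [hc]
    simp only [hu]
    rw [dotProduct_mulVec _ Atᵀ u, vecMul_transpose, hAB, zero_dotProduct]
  have hBne : ∀ j, (B j : Fin n → ℝ) ≠ 0 := by
    intro j hj
    have := horm j j
    rw [hj] at this
    simp at this
  have hge : ∀ j, lam j ≠ 0 → σ ^ 2 ≤ lam j := fun j hj =>
    hmin (lam j) hj ⟨B j, hBne j, heig j⟩
  rw [hnormSq, hquad, Finset.mul_sum]
  apply Finset.sum_le_sum
  intro j _
  by_cases h0 : lam j = 0
  · rw [h0, hzero j h0]; simp
  · exact mul_le_mul_of_nonneg_right (hge j h0) (sq_nonneg _)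

lemma sigma_sq_le_frob (At : Matrix (Fin m) (Fin n) ℝ) (σ : ℝ)
    (hσ : IsSmallestNonzeroSingularValue At σ) : σ ^ 2 ≤ frobSq At := by
  obtain ⟨hσpos, ⟨v, hvne, hveig⟩, -⟩ := hσ
  have h1 : σ ^ 2 * normSq v = normSq (At.mulVec v) := by
    rw [normSq_mulVec, hveig, dotProduct_smul, normSq_eq_dot]
    simp [smul_eq_mul]
  have h2 : normSq (At.mulVec v) ≤ frobSq At * normSq v := by
    rw [frobSq, Finset.sum_mul]
    apply Finset.sum_le_sum
    intro i _
    have := Finset.sum_mul_sq_le_sq_mul_sq Finset.univ (At i) v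
    simpa [normSq, mulVec, dotProduct] using this
  have hv : 0 < normSq v := normSq_pos hvne
  rw [← h1] at h2
  exact le_of_mul_le_mul_right h2 hv

lemma frobSq_eq_sum (At : Matrix (Fin m) (Fin n) ℝ) : frobSq At = ∑ i, normSq (At i) := rfl

lemma rkExp_mono (At : Matrix (Fin m) (Fin n) ℝ) (bt : Fin m → ℝ)
    (P : (Fin n → ℝ) → Prop)
    (hinv : ∀ i x, P x → P (rkStep At bt i x)) (hF : 0 < frobSq At) :
    ∀ (k : ℕ) (x : Fin n → ℝ), P x → ∀ f g : (Fin n → ℝ) → ℝ,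
      (∀ y, P y → f y ≤ g y) → rkExp At bt x k f ≤ rkExp At bt x k g := by
  intro k
  induction k with
  | zero => intro x hx f g hfg; exact hfg x hx
  | succ k ih =>
      intro x hx f g hfg
      show rkExp At bt x k _ ≤ rkExp At bt x k _
      apply ih x hx
      intro y hy
      apply Finset.sum_le_sum
      intro i _
      exact mul_le_mul_of_nonneg_left (hfg _ (hinv i y hy))
        (div_nonneg (normSq_nonneg _) hF.le)

lemma rkExp_affine (At : Matrix (Fin m) (Fin n) ℝ) (bt : Fin m → ℝ) (hF : frobSq At ≠ 0) :
    ∀ (k : ℕ) (x : Fin n → ℝ) (g : (Fin n → ℝ) → ℝ) (c d : ℝ),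
      rkExp At bt x k (fun y => c * g y + d) = c * rkExp At bt x k g + d := by
  have hsum : ∑ i, normSq (At i) / frobSq At = (1:ℝ) := by
    rw [← Finset.sum_div, ← frobSq_eq_sum, div_self hF]
  intro k
  induction k with
  | zero => intro x g c d; rfl
  | succ k ih =>
      intro x g c d
      show rkExp At bt x k _ = c * rkExp At bt x k _ + d
      have hfun : (fun y => ∑ i, normSq (At i) / frobSq At * (c * g (rkStep At bt i y) + d))
          = fun y => c * (∑ i, normSq (At i) / frobSq At * g (rkStep At bt i y)) + d := by
        funext y
        rw [Finset.mul_sum]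
        have : ∀ i : Fin m, normSq (At i) / frobSq At * (c * g (rkStep At bt i y) + d)
            = c * (normSq (At i) / frobSq At * g (rkStep At bt i y))
              + normSq (At i) / frobSq At * d := by intro i; ring
        simp_rw [this, Finset.sum_add_distrib, ← Finset.sum_mul, hsum, one_mul]
      rw [hfun, ih]

lemma step_sub (At : Matrix (Fin m) (Fin n) ℝ) (bt : Fin m → ℝ) (i : Fin m)
    (x ystar : Fin n → ℝ) :
    rkStep At bt i x - ystar
      = (x - ystar) - (((At.mulVec (x - ystar)) i + (At.mulVec ystar - bt) i)
          / normSq (At i)) • At i := by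
  have h1 : dot (At i) x - bt i
      = (At.mulVec (x - ystar)) i + (At.mulVec ystar - bt) i := by
    simp only [Pi.sub_apply, mulVec, dot_eq_dotProduct, dotProduct_sub]
    ring
  rw [rkStep, h1]
  abel

lemma normSq_sub_smul (e a : Fin n → ℝ) (t : ℝ) :
    normSq (e - t • a) = normSq e - 2 * t * (a ⬝ᵥ e) + t ^ 2 * normSq a := by
  simp only [normSq, Pi.sub_apply, Pi.smul_apply, smul_eq_mul, dotProduct]
  have : ∀ i, (e i - t * a i) ^ 2
      = e i ^ 2 - 2 * t * (a i * e i) + t ^ 2 * a i ^ 2 := by intro i; ring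
  simp_rw [this, Finset.sum_add_distrib, Finset.sum_sub_distrib, ← Finset.mul_sum]

/-- The conditional expectation of `‖x' − y*‖²` after one RK step. -/
lemma step_exp (At : Matrix (Fin m) (Fin n) ℝ) (bt : Fin m → ℝ)
    (hrows : ∀ i, At i ≠ 0) (hF : 0 < frobSq At) (x ystar : Fin n → ℝ) :
    ∑ i, normSq (At i) / frobSq At * normSq (rkStep At bt i x - ystar)
      = normSq (x - ystar) - normSq (At.mulVec (x - ystar)) / frobSq At
        + normSq (At.mulVec ystar - bt) / frobSq At := by
  set e := x - ystar with he
  have hterm : ∀ i, normSq (At i) / frobSq At * normSq (rkStep At bt i x - ystar)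
      = normSq (At i) / frobSq At * normSq e
        + (((At.mulVec ystar - bt) i) ^ 2 - ((At.mulVec e) i) ^ 2) / frobSq At := by
    intro i
    have hs : normSq (At i) ≠ 0 := (normSq_pos (hrows i)).ne'
    rw [step_sub At bt i x ystar, ← he, normSq_sub_smul]
    have hae : At i ⬝ᵥ e = (At.mulVec e) i := rfl
    rw [hae]
    set d := (At.mulVec e) i
    set N := (At.mulVec ystar - bt) i
    field_simp
    ring
  rw [Finset.sum_congr rfl (fun i _ => hterm i), Finset.sum_add_distrib, ← Finset.sum_mul,
    ← Finset.sum_div, ← frobSq_eq_sum, div_self hF.ne', one_mul]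
  have h1 : ∑ i, (((At.mulVec ystar - bt) i) ^ 2 - ((At.mulVec e) i) ^ 2)
      = normSq (At.mulVec ystar - bt) - normSq (At.mulVec e) := by
    rw [Finset.sum_sub_distrib]; rfl
  rw [← Finset.sum_div, h1]
  ring

lemma step_inv (At : Matrix (Fin m) (Fin n) ℝ) (bt : Fin m → ℝ) (ystar : Fin n → ℝ)
    (i : Fin m) (x : Fin n → ℝ) (h : x - ystar ∈ rowSpace At) :
    rkStep At bt i x - ystar ∈ rowSpace At := by
  obtain ⟨u, hu⟩ := h
  refine ⟨u - (((At.mulVec (x - ystar)) i + (At.mulVec ystar - bt) i) / normSq (At i))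
      • ((Pi.single i 1 : Fin m → ℝ)), ?_⟩
  rw [step_sub At bt i x ystar, hu, mulVec_sub, mulVec_smul, mulVec_single]
  congr 1
  · funext j
    simp [transpose_apply]


/-- Main recursion bound for the RK error with reference point `y* = x₀ⁿ + x_LSʳ`. -/
lemma main_bound (At : Matrix (Fin m) (Fin n) ℝ) (bt : Fin m → ℝ)
    (hrows : ∀ i, At i ≠ 0) (σ : ℝ) (hσ : IsSmallestNonzeroSingularValue At σ)
    (ystar x0 : Fin n → ℝ) (hx0P : x0 - ystar ∈ rowSpace At) (k : ℕ) :
    rkExp At bt x0 k (fun x => normSq (x - ystar)) ≤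
      (1 - σ ^ 2 / frobSq At) ^ k * normSq (x0 - ystar)
        + (∑ j ∈ Finset.range k, (1 - σ ^ 2 / frobSq At) ^ j)
            * (normSq (At.mulVec ystar - bt) / frobSq At) := by
  have hσ2 : 0 < σ ^ 2 := pow_pos hσ.1 2
  have hF : 0 < frobSq At := lt_of_lt_of_le hσ2 (sigma_sq_le_frob At σ hσ)
  set q : ℝ := 1 - σ ^ 2 / frobSq At with hq
  set C : ℝ := normSq (At.mulVec ystar - bt) / frobSq At with hC
  have hq0 : 0 ≤ q := by
    rw [hq, sub_nonneg]
    exact (div_le_one hF).2 (sigma_sq_le_frob At σ hσ)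
  induction k with
  | zero =>
      show normSq (x0 - ystar) ≤ _
      simp
  | succ k ih =>
      have hstep : ∀ y, y - ystar ∈ rowSpace At →
          (∑ i, normSq (At i) / frobSq At * normSq (rkStep At bt i y - ystar))
            ≤ q * normSq (y - ystar) + C := by
        intro y hy
        rw [step_exp At bt hrows hF y ystar]
        have hsp := spectral_bound At σ hσ (y - ystar) hy
        have hdiv : σ ^ 2 * normSq (y - ystar) / frobSq At
            ≤ normSq (At.mulVec (y - ystar)) / frobSq At :=
          (div_le_div_iff_of_pos_right hF).2 hsp
        have hq' : q * normSq (y - ystar)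
            = normSq (y - ystar) - σ ^ 2 * normSq (y - ystar) / frobSq At := by
          rw [hq]; ring
        rw [hq', ← hC]
        linarith
      calc rkExp At bt x0 (k + 1) (fun x => normSq (x - ystar))
          = rkExp At bt x0 k
              (fun y => ∑ i, normSq (At i) / frobSq At * normSq (rkStep At bt i y - ystar)) := rfl
        _ ≤ rkExp At bt x0 k (fun y => q * normSq (y - ystar) + C) :=
            rkExp_mono At bt (fun x => x - ystar ∈ rowSpace At)
              (fun i x hx => step_inv At bt ystar i x hx) hF k x0 hx0P _ _ hstep
        _ = q * rkExp At bt x0 k (fun y => normSq (y - ystar)) + C :=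
            rkExp_affine At bt hF.ne' k x0 _ q C
        _ ≤ q * (q ^ k * normSq (x0 - ystar)
              + (∑ j ∈ Finset.range k, q ^ j) * C) + C :=
            add_le_add_left (mul_le_mul_of_nonneg_left ih hq0) C
        _ = q ^ (k + 1) * normSq (x0 - ystar)
              + (∑ j ∈ Finset.range (k + 1), q ^ j) * C := by
            rw [geom_sum_succ]; ring

theorem rk_reference_least_squares_of_consistent {m n : ℕ}
    (At : Matrix (Fin m) (Fin n) ℝ) (bt : Fin m → ℝ)
    (hAt : At ≠ 0) (hrows : ∀ i, At i ≠ 0)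
    (σmin : ℝ) (hσ : IsSmallestNonzeroSingularValue At σmin)
    (x0 x0r x0n : Fin n → ℝ)
    (hx0r : x0r ∈ rowSpace At) (hx0n : x0n ∈ nullSpace At) (hx0 : x0 = x0r + x0n)
    (A : Matrix (Fin m) (Fin n) ℝ) (b : Fin m → ℝ)
    (hcons : ∃ x, A.mulVec x = b)
    (Ap : Matrix (Fin n) (Fin m) ℝ) (hAp : IsMoorePenrose A Ap)
    (xLSr xLSn : Fin n → ℝ)
    (hLSr : xLSr ∈ rowSpace At) (hLSn : xLSn ∈ nullSpace At)
    (hLS : Ap.mulVec b = xLSr + xLSn)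
    (k : ℕ) :
    rkExp At bt x0 k (fun x => normSq (x - x0n - xLSr)) ≤
      (1 - σmin ^ 2 / frobSq At) ^ k * normSq (x0r - xLSr)
        + normSq ((At - A).mulVec (Ap.mulVec b) - (bt - b)) / σmin ^ 2 := by
  have hσ2 : 0 < σmin ^ 2 := pow_pos hσ.1 2
  have hF : 0 < frobSq At := lt_of_lt_of_le hσ2 (sigma_sq_le_frob At σmin hσ)
  set ystar : Fin n → ℝ := x0n + xLSr with hy
  have hfun : (fun x : Fin n → ℝ => normSq (x - x0n - xLSr))
      = fun x => normSq (x - ystar) := by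
    funext x; rw [hy, sub_sub]
  have hx0P : x0 - ystar ∈ rowSpace At := by
    obtain ⟨u1, hu1⟩ := hx0r
    obtain ⟨u2, hu2⟩ := hLSr
    refine ⟨u1 - u2, ?_⟩
    rw [mulVec_sub, ← hu1, ← hu2, hx0, hy]
    abel
  have hD0 : normSq (x0 - ystar) = normSq (x0r - xLSr) := by
    rw [hx0, hy]; congr 1; abel
  have hb : A.mulVec (Ap.mulVec b) = b := by
    obtain ⟨x, hx⟩ := hcons
    rw [← hx, mulVec_mulVec, mulVec_mulVec, hAp.1]
  have hN : (At - A).mulVec (Ap.mulVec b) - (bt - b) = At.mulVec ystar - bt := by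
    rw [sub_mulVec, hb, hLS, mulVec_add, hLSn, hy, mulVec_add, hx0n]
    abel
  have hq0 : 0 ≤ 1 - σmin ^ 2 / frobSq At := by
    rw [sub_nonneg]
    exact (div_le_one hF).2 (sigma_sq_le_frob At σmin hσ)
  have hSk : (∑ j ∈ Finset.range k, (1 - σmin ^ 2 / frobSq At) ^ j) ≤ frobSq At / σmin ^ 2 := by
    have hgs := geom_sum_mul (1 - σmin ^ 2 / frobSq At) k
    have hpow : 0 ≤ (1 - σmin ^ 2 / frobSq At) ^ k := pow_nonneg hq0 k
    rw [le_div_iff₀ hσ2]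
    have h1 : (∑ j ∈ Finset.range k, (1 - σmin ^ 2 / frobSq At) ^ j) * (σmin ^ 2 / frobSq At)
        ≤ 1 := by nlinarith
    have h2 : (∑ j ∈ Finset.range k, (1 - σmin ^ 2 / frobSq At) ^ j) * (σmin ^ 2 / frobSq At)
        * frobSq At = (∑ j ∈ Finset.range k, (1 - σmin ^ 2 / frobSq At) ^ j) * σmin ^ 2 := by
      field_simp
    nlinarith
  have hC0 : 0 ≤ normSq (At.mulVec ystar - bt) / frobSq At :=
    div_nonneg (normSq_nonneg _) hF.le
  have hSC : (∑ j ∈ Finset.range k, (1 - σmin ^ 2 / frobSq At) ^ j)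
        * (normSq (At.mulVec ystar - bt) / frobSq At)
      ≤ normSq (At.mulVec ystar - bt) / σmin ^ 2 := by
    have := mul_le_mul_of_nonneg_right hSk hC0
    calc (∑ j ∈ Finset.range k, (1 - σmin ^ 2 / frobSq At) ^ j)
          * (normSq (At.mulVec ystar - bt) / frobSq At)
        ≤ frobSq At / σmin ^ 2 * (normSq (At.mulVec ystar - bt) / frobSq At) := this
      _ = normSq (At.mulVec ystar - bt) / σmin ^ 2 := by
          field_simp
  calc rkExp At bt x0 k (fun x => normSq (x - x0n - xLSr))
      = rkExp At bt x0 k (fun x => normSq (x - ystar)) := by rw [hfun]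
    _ ≤ (1 - σmin ^ 2 / frobSq At) ^ k * normSq (x0 - ystar)
          + (∑ j ∈ Finset.range k, (1 - σmin ^ 2 / frobSq At) ^ j)
              * (normSq (At.mulVec ystar - bt) / frobSq At) :=
        main_bound At bt hrows σmin hσ ystar x0 hx0P k
    _ ≤ (1 - σmin ^ 2 / frobSq At) ^ k * normSq (x0r - xLSr)
          + normSq (At.mulVec ystar - bt) / σmin ^ 2 := by
        rw [hD0]; exact add_le_add_right hSC _
    _ = (1 - σmin ^ 2 / frobSq At) ^ k * normSq (x0r - xLSr)
          + normSq ((At - A).mulVec (Ap.mulVec b) - (bt - b)) / σmin ^ 2 := by rw [hN]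

end RK
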